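/- arXiv:2409.16691 — 3 statements merged into one kernel-verified Lean document; each statement's English description precedes it below -/
import Mathlib

section
/- Let 0 < α < n and let g : ℝⁿ → [0,∞) be measurable. Suppose g belongs to the Morrey space Ṁ^{1, n/β}(ℝⁿ) for some α < β < n (equivalently, the heat extension satisfies t^{β/2} ‖h_t * g‖_{L^∞} ≤ C₀ for all t > 0). Then for all x ∈ ℝⁿ: I_α(g)(x) ≤ C(n,α,β) ( M_B g(x) )^{1-α/β} ‖g‖_{Ṁ^{1,n/β}}^{α/β}, where I_α(g)(x) = Γ(α/2)^{-1} ∫_0^∞ t^{α/2 - 1} (h_t * g)(x) dt is the Riesz potential, M_B is the Hardy–Littlewood maximal function, and h_t is the heat kernel. -/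
open MeasureTheory Metric Set ENNReal

noncomputable def heatK (n : ℕ) (t : ℝ) (x : EuclideanSpace ℝ (Fin n)) : ℝ :=
  (4 * Real.pi * t) ^ (-(n : ℝ) / 2) * Real.exp (-‖x‖ ^ 2 / (4 * t))

noncomputable def heatConv (n : ℕ) (t : ℝ) (g : EuclideanSpace ℝ (Fin n) → ℝ)
    (x : EuclideanSpace ℝ (Fin n)) : ℝ≥0∞ :=
  ∫⁻ y, ENNReal.ofReal (heatK n t (x - y) * g y)

noncomputable def maximalFn (n : ℕ) (g : EuclideanSpace ℝ (Fin n) → ℝ)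
    (x : EuclideanSpace ℝ (Fin n)) : ℝ≥0∞ :=
  ⨆ (z : EuclideanSpace ℝ (Fin n)) (r : ℝ) (_ : 0 < r) (_ : x ∈ ball z r),
    (volume (ball z r))⁻¹ * ∫⁻ y in ball z r, ENNReal.ofReal (|g y|)

noncomputable def morreyNorm (n : ℕ) (p q : ℝ) (f : EuclideanSpace ℝ (Fin n) → ℝ) : ℝ≥0∞ :=
  ⨆ (x : EuclideanSpace ℝ (Fin n)) (r : ℝ) (_ : 0 < r),
    (ENNReal.ofReal (r ^ (-((n : ℝ) * (1 - p / q)))) *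
      ∫⁻ y in ball x r, ENNReal.ofReal (|f y| ^ p)) ^ (1 / p)

/-- Riesz potential of order `α` written through the heat semigroup. -/
noncomputable def rieszHeat (n : ℕ) (α : ℝ) (g : EuclideanSpace ℝ (Fin n) → ℝ)
    (x : EuclideanSpace ℝ (Fin n)) : ℝ≥0∞ :=
  (ENNReal.ofReal (Real.Gamma (α / 2)))⁻¹ *
    ∫⁻ t in Ioi (0 : ℝ), ENNReal.ofReal (t ^ (α / 2 - 1)) * heatConv n t g x



open Real in
lemma exp_layercake {t r : ℝ} (ht : 0 < t) (hr : 0 ≤ r) :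
    ENNReal.ofReal (Real.exp (-r ^ 2 / (4 * t))) =
      ∫⁻ s in Ioi r, ENNReal.ofReal (s / (2 * t) * Real.exp (-s ^ 2 / (4 * t))) := by
  have hb : (0:ℝ) < 1 / (4 * t) := by positivity
  have hfun : (fun s : ℝ => s / (2 * t) * Real.exp (-s ^ 2 / (4 * t)))
      = fun s : ℝ => (1 / (2 * t)) * (s * Real.exp (-(1 / (4 * t)) * s ^ 2)) := by
    funext s
    have h1 : -s ^ 2 / (4 * t) = -(1 / (4 * t)) * s ^ 2 := by ring
    rw [h1]; ring
  have hint : IntegrableOn (fun s : ℝ => s / (2 * t) * Real.exp (-s ^ 2 / (4 * t))) (Ioi r) := by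
    rw [hfun]
    exact ((integrable_mul_exp_neg_mul_sq hb).const_mul _).integrableOn
  have hderiv : ∀ s ∈ Ici r, HasDerivAt (fun s : ℝ => -Real.exp (-s ^ 2 / (4 * t)))
      (s / (2 * t) * Real.exp (-s ^ 2 / (4 * t))) s := by
    intro s _
    have h1 : HasDerivAt (fun s : ℝ => -s ^ 2 / (4 * t)) (-(2 * s) / (4 * t)) s := by
      simpa [neg_div] using ((hasDerivAt_pow 2 s).neg.div_const (4 * t))
    have := (h1.exp).neg
    refine this.congr_deriv ?_
    ring
  have htend : Filter.Tendsto (fun s : ℝ => -Real.exp (-s ^ 2 / (4 * t))) Filter.atTop (nhds 0) := by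
    rw [show (0:ℝ) = -0 by ring]
    apply Filter.Tendsto.neg
    apply Real.tendsto_exp_atBot.comp
    have h2 : Filter.Tendsto (fun s : ℝ => s ^ 2 / (4 * t)) Filter.atTop Filter.atTop :=
      (Filter.tendsto_pow_atTop two_ne_zero).atTop_div_const (by positivity)
    have h3 := Filter.tendsto_neg_atTop_atBot.comp h2
    simpa [Function.comp_def, neg_div] using h3
  have hFTC : ∫ s in Ioi r, s / (2 * t) * Real.exp (-s ^ 2 / (4 * t))
      = Real.exp (-r ^ 2 / (4 * t)) := by
    rw [integral_Ioi_of_hasDerivAt_of_tendsto' hderiv hint htend]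
    ring
  rw [← hFTC]
  apply ofReal_integral_eq_lintegral_ofReal hint
  filter_upwards [ae_restrict_mem measurableSet_Ioi] with s hs
  have hs0 : 0 ≤ s := hr.trans (le_of_lt hs)
  positivity

noncomputable def Kc (n : ℕ) (γ : ℝ) : ℝ :=
  (4 * Real.pi) ^ (-(n : ℝ) / 2) * 4 ^ ((γ + 2) / 2) * Real.Gamma ((γ + 2) / 2) / 4

lemma Kc_pos (n : ℕ) {γ : ℝ} (hγ : -2 < γ) : 0 < Kc n γ := by
  have h1 : 0 < Real.Gamma ((γ + 2) / 2) := Real.Gamma_pos_of_pos (by linarith)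
  have h2 : (0:ℝ) < (4 * Real.pi) ^ (-(n : ℝ) / 2) := Real.rpow_pos_of_pos (by positivity) _
  have h3 : (0:ℝ) < (4:ℝ) ^ ((γ + 2) / 2) := Real.rpow_pos_of_pos (by norm_num) _
  unfold Kc
  positivity

lemma oneD (n : ℕ) {t γ : ℝ} (ht : 0 < t) (hγ : -2 < γ) :
    ∫⁻ s in Ioi (0:ℝ), ENNReal.ofReal ((4 * Real.pi * t) ^ (-(n : ℝ) / 2) *
        (s / (2 * t) * Real.exp (-s ^ 2 / (4 * t))) * s ^ γ)
      = ENNReal.ofReal (Kc n γ * t ^ ((γ - (n:ℝ)) / 2)) := by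
  have hb : (0:ℝ) < 1 / (4 * t) := by positivity
  set c : ℝ := (4 * Real.pi * t) ^ (-(n : ℝ) / 2) with hcdef
  have hc : (0:ℝ) < c := Real.rpow_pos_of_pos (by positivity) _
  set C : ℝ := c / (2 * t) with hCdef
  have hC : (0:ℝ) < C := by positivity
  set f : ℝ → ℝ := fun s => C * (s ^ (γ + 1) * Real.exp (-(1 / (4 * t)) * s ^ (2:ℝ))) with hfdef
  have hf2 : f = fun s => C * (s ^ (γ + 1) * Real.exp (-(1 / (4 * t)) * s ^ (2:ℕ))) := by
    funext s
    have : s ^ (2:ℝ) = s ^ (2:ℕ) := by norm_num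
    simp only [hfdef, this]
  have hint : IntegrableOn f (Ioi (0:ℝ)) := by
    rw [hf2]
    exact ((integrableOn_rpow_mul_exp_neg_mul_sq hb
      (show (-1:ℝ) < γ + 1 by linarith)).const_mul C)
  -- step 1 : integrands agree on Ioi 0
  have e0 : ∫⁻ s in Ioi (0:ℝ), ENNReal.ofReal (c * (s / (2 * t) * Real.exp (-s ^ 2 / (4 * t))) * s ^ γ)
      = ∫⁻ s in Ioi (0:ℝ), ENNReal.ofReal (f s) := by
    refine setLIntegral_congr_fun measurableSet_Ioi ?_
    intro s hs
    rw [mem_Ioi] at hs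
    congr 1
    have h2s : s ^ (2:ℝ) = s ^ (2:ℕ) := by norm_num
    simp only [hfdef]
    rw [h2s, Real.rpow_add_one (ne_of_gt hs),
      show -(1 / (4 * t)) * s ^ (2:ℕ) = -s ^ (2:ℕ) / (4 * t) by ring, hCdef]
    ring
  rw [e0, ← ofReal_integral_eq_lintegral_ofReal hint ?nn]
  case nn =>
    filter_upwards [ae_restrict_mem measurableSet_Ioi] with s hs
    rw [mem_Ioi] at hs
    have : (0:ℝ) ≤ s ^ (γ+1) := Real.rpow_nonneg (le_of_lt hs) _
    rw [hfdef]
    positivity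
  -- step 2 : compute the integral
  have hval : ∫ s in Ioi (0:ℝ), f s
      = C * ((1 / (4 * t)) ^ (-(γ + 1 + 1) / 2) * (1 / 2) * Real.Gamma ((γ + 1 + 1) / 2)) := by
    rw [hfdef]
    simp only
    rw [integral_const_mul, integral_rpow_mul_exp_neg_mul_rpow two_pos
      (show (-1:ℝ) < γ + 1 by linarith) hb]
  rw [hval]
  congr 1
  have he : γ + 1 + 1 = γ + 2 := by ring
  rw [he]
  have h1 : (1 / (4 * t)) ^ (-(γ + 2) / 2) = 4 ^ ((γ + 2) / 2) * t ^ ((γ + 2) / 2) := by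
    rw [show -(γ + 2) / 2 = -((γ + 2) / 2) by ring, one_div,
      Real.inv_rpow (by positivity), Real.rpow_neg (by positivity), inv_inv,
      Real.mul_rpow (by norm_num) ht.le]
  have h2 : c = (4 * Real.pi) ^ (-(n : ℝ) / 2) * t ^ (-(n : ℝ) / 2) := by
    rw [hcdef, Real.mul_rpow (by positivity) ht.le]
  have h3 : t ^ (-(n : ℝ) / 2) * t ^ ((γ + 2) / 2) = t ^ ((γ - (n:ℝ)) / 2) * t := by
    rw [← Real.rpow_add ht, ← Real.rpow_add_one (ne_of_gt ht)]
    congr 1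
    ring
  rw [hCdef, h2, h1]
  unfold Kc
  field_simp
  rw [neg_div] at h3
  linear_combination (4 * Real.Gamma ((γ + 2) / 2)) * h3

lemma heatConv_repr (n : ℕ) {t : ℝ} (ht : 0 < t) {g : EuclideanSpace ℝ (Fin n) → ℝ}
    (hg : Measurable g) (hg0 : ∀ y, 0 ≤ g y) (x : EuclideanSpace ℝ (Fin n)) :
    heatConv n t g x = ∫⁻ s in Ioi (0:ℝ),
      ENNReal.ofReal ((4 * Real.pi * t) ^ (-(n : ℝ) / 2) *
        (s / (2 * t) * Real.exp (-s ^ 2 / (4 * t)))) *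
        ∫⁻ y in ball x s, ENNReal.ofReal (g y) := by
  have hπ : (0:ℝ) < 4 * Real.pi * t := by positivity
  have hc : (0:ℝ) < (4 * Real.pi * t) ^ (-(n : ℝ) / 2) := Real.rpow_pos_of_pos hπ _
  set c : ℝ := (4 * Real.pi * t) ^ (-(n : ℝ) / 2) with hcdef
  set φ : ℝ → ℝ := fun s => s / (2 * t) * Real.exp (-s ^ 2 / (4 * t)) with hφdef
  have hφm : Measurable φ := by fun_prop
  set H : EuclideanSpace ℝ (Fin n) → ℝ → ℝ≥0∞ := fun y s =>
    if ‖x - y‖ < s then ENNReal.ofReal c * ENNReal.ofReal (g y) * ENNReal.ofReal (φ s) else 0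
    with hHdef
  have step1 : heatConv n t g x = ∫⁻ y, ∫⁻ s in Ioi (0:ℝ), H y s := by
    unfold heatConv heatK
    refine lintegral_congr fun y => ?_
    have e1 : ENNReal.ofReal (c * Real.exp (-‖x - y‖ ^ 2 / (4 * t)) * g y)
        = (ENNReal.ofReal c * ENNReal.ofReal (g y)) *
          ENNReal.ofReal (Real.exp (-‖x - y‖ ^ 2 / (4 * t))) := by
      rw [ENNReal.ofReal_mul (by positivity), ENNReal.ofReal_mul hc.le]
      ring
    rw [e1, exp_layercake ht (norm_nonneg _), ← lintegral_const_mul' _ _ (by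
      exact ENNReal.mul_ne_top ENNReal.ofReal_ne_top ENNReal.ofReal_ne_top)]
    have e2 : ∀ s : ℝ, H y s = (Ioi ‖x - y‖).indicator
        (fun s => ENNReal.ofReal c * ENNReal.ofReal (g y) * ENNReal.ofReal (φ s)) s := by
      intro s
      simp only [hHdef, Set.indicator_apply, mem_Ioi]
    calc ∫⁻ s in Ioi ‖x - y‖, ENNReal.ofReal c * ENNReal.ofReal (g y) * ENNReal.ofReal (φ s)
        = ∫⁻ s in Ioi ‖x - y‖ ∩ Ioi (0:ℝ),
            ENNReal.ofReal c * ENNReal.ofReal (g y) * ENNReal.ofReal (φ s) := by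
          rw [Ioi_inter_Ioi, sup_eq_left.mpr (norm_nonneg _)]
      _ = ∫⁻ s in Ioi (0:ℝ), H y s := by
          rw [← Measure.restrict_restrict measurableSet_Ioi,
            ← lintegral_indicator measurableSet_Ioi]
          exact lintegral_congr fun s => (e2 s).symm
  have hHm : AEMeasurable (Function.uncurry H)
      ((volume : Measure (EuclideanSpace ℝ (Fin n))).prod (volume.restrict (Ioi (0:ℝ)))) := by
    refine Measurable.aemeasurable ?_
    refine Measurable.ite ?_ ?_ measurable_const
    · exact measurableSet_lt ((continuous_const.sub continuous_fst).norm).measurable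
        measurable_snd
    · exact ((measurable_const.mul ((hg.comp measurable_fst).ennreal_ofReal)).mul
        ((hφm.comp measurable_snd).ennreal_ofReal))
  rw [step1, lintegral_lintegral_swap hHm]
  refine lintegral_congr fun s => ?_
  have e3 : ∀ y, H y s = (ball x s).indicator
      (fun y => (ENNReal.ofReal c * ENNReal.ofReal (φ s)) * ENNReal.ofReal (g y)) y := by
    intro y
    by_cases hy : ‖x - y‖ < s
    · have hmem : y ∈ ball x s := by rwa [mem_ball, dist_eq_norm, norm_sub_rev]
      simp only [hHdef, if_pos hy, Set.indicator_of_mem hmem]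
      ring
    · have hmem : y ∉ ball x s := by rw [mem_ball, dist_eq_norm, norm_sub_rev]; exact hy
      simp only [hHdef, if_neg hy, Set.indicator_of_notMem hmem]
  calc ∫⁻ y, H y s = ∫⁻ y in ball x s, (ENNReal.ofReal c * ENNReal.ofReal (φ s)) *
        ENNReal.ofReal (g y) := by
        rw [← lintegral_indicator measurableSet_ball]
        exact lintegral_congr fun y => e3 y
    _ = ENNReal.ofReal (c * φ s) * ∫⁻ y in ball x s, ENNReal.ofReal (g y) := by
        rw [lintegral_const_mul' _ _ (by
          exact ENNReal.mul_ne_top ENNReal.ofReal_ne_top ENNReal.ofReal_ne_top),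
          ENNReal.ofReal_mul hc.le]

lemma heatConv_le_bound (n : ℕ) {t γ : ℝ} (ht : 0 < t) (hγ : -2 < γ)
    {g : EuclideanSpace ℝ (Fin n) → ℝ} (hg : Measurable g) (hg0 : ∀ y, 0 ≤ g y)
    (x : EuclideanSpace ℝ (Fin n)) (D : ℝ≥0∞)
    (hball : ∀ s : ℝ, 0 < s →
      (∫⁻ y in ball x s, ENNReal.ofReal (g y)) ≤ ENNReal.ofReal (s ^ γ) * D) :
    heatConv n t g x ≤ ENNReal.ofReal (Kc n γ * t ^ ((γ - (n:ℝ)) / 2)) * D := by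
  rw [heatConv_repr n ht hg hg0 x, ← oneD n ht hγ]
  have hmeas : Measurable fun s : ℝ => ENNReal.ofReal ((4 * Real.pi * t) ^ (-(n : ℝ) / 2) *
      (s / (2 * t) * Real.exp (-s ^ 2 / (4 * t))) * s ^ γ) * D := by fun_prop
  calc ∫⁻ s in Ioi (0:ℝ), ENNReal.ofReal ((4 * Real.pi * t) ^ (-(n : ℝ) / 2) *
        (s / (2 * t) * Real.exp (-s ^ 2 / (4 * t)))) * ∫⁻ y in ball x s, ENNReal.ofReal (g y)
      ≤ ∫⁻ s in Ioi (0:ℝ), ENNReal.ofReal ((4 * Real.pi * t) ^ (-(n : ℝ) / 2) *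
        (s / (2 * t) * Real.exp (-s ^ 2 / (4 * t))) * s ^ γ) * D := by
        refine setLIntegral_mono hmeas ?_
        intro s hs
        rw [mem_Ioi] at hs
        calc ENNReal.ofReal ((4 * Real.pi * t) ^ (-(n : ℝ) / 2) *
              (s / (2 * t) * Real.exp (-s ^ 2 / (4 * t)))) * ∫⁻ y in ball x s, ENNReal.ofReal (g y)
            ≤ ENNReal.ofReal ((4 * Real.pi * t) ^ (-(n : ℝ) / 2) *
              (s / (2 * t) * Real.exp (-s ^ 2 / (4 * t)))) * (ENNReal.ofReal (s ^ γ) * D) :=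
              mul_le_mul_right (hball s hs) _
          _ = ENNReal.ofReal ((4 * Real.pi * t) ^ (-(n : ℝ) / 2) *
              (s / (2 * t) * Real.exp (-s ^ 2 / (4 * t))) * s ^ γ) * D := by
              have ha : (0:ℝ) ≤ (4 * Real.pi * t) ^ (-(n : ℝ) / 2) :=
                le_of_lt (Real.rpow_pos_of_pos (by positivity) _)
              have hb : (0:ℝ) ≤ s / (2 * t) * Real.exp (-s ^ 2 / (4 * t)) := by positivity
              rw [ENNReal.ofReal_mul (mul_nonneg ha hb), ENNReal.ofReal_mul ha]
              ring
    _ = (∫⁻ s in Ioi (0:ℝ), ENNReal.ofReal ((4 * Real.pi * t) ^ (-(n : ℝ) / 2) *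
        (s / (2 * t) * Real.exp (-s ^ 2 / (4 * t))) * s ^ γ)) * D := by
        exact lintegral_mul_const D (by fun_prop)

lemma ball_le_maximal (n : ℕ) (hn : 1 ≤ n) {g : EuclideanSpace ℝ (Fin n) → ℝ}
    (hg0 : ∀ y, 0 ≤ g y) (x : EuclideanSpace ℝ (Fin n)) {s : ℝ} (hs : 0 < s) :
    ∫⁻ y in ball x s, ENNReal.ofReal (g y) ≤
      ENNReal.ofReal (s ^ (n:ℝ)) *
        (volume (ball (0 : EuclideanSpace ℝ (Fin n)) 1) * maximalFn n g x) := by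
  have hne : Nonempty (Fin n) := ⟨⟨0, hn⟩⟩
  have : Nontrivial (EuclideanSpace ℝ (Fin n)) := by infer_instance
  have habs : ∀ y, ENNReal.ofReal (g y) = ENNReal.ofReal |g y| := fun y => by
    rw [abs_of_nonneg (hg0 y)]
  have hvol : volume (ball x s) = ENNReal.ofReal (s ^ n) *
      volume (ball (0 : EuclideanSpace ℝ (Fin n)) 1) := by
    rw [Measure.addHaar_ball volume x hs.le, finrank_euclideanSpace_fin]
  have hv0 : volume (ball x s) ≠ 0 := (measure_ball_pos volume x hs).ne'
  have hvtop : volume (ball x s) ≠ ⊤ := measure_ball_lt_top.ne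
  have hM : (volume (ball x s))⁻¹ * ∫⁻ y in ball x s, ENNReal.ofReal |g y|
      ≤ maximalFn n g x := by
    refine le_iSup_of_le x ?_
    refine le_iSup_of_le s ?_
    refine le_iSup_of_le hs ?_
    exact le_iSup_of_le (mem_ball_self hs) le_rfl
  calc ∫⁻ y in ball x s, ENNReal.ofReal (g y)
      = volume (ball x s) * ((volume (ball x s))⁻¹ * ∫⁻ y in ball x s, ENNReal.ofReal |g y|) := by
        simp_rw [habs]
        rw [← mul_assoc, ENNReal.mul_inv_cancel hv0 hvtop, one_mul]
    _ ≤ volume (ball x s) * maximalFn n g x := mul_le_mul_right hM _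
    _ = ENNReal.ofReal (s ^ (n:ℝ)) *
        (volume (ball (0 : EuclideanSpace ℝ (Fin n)) 1) * maximalFn n g x) := by
        rw [hvol, Real.rpow_natCast, mul_assoc]

lemma ball_le_morrey (n : ℕ) (hn : 1 ≤ n) {β : ℝ} (hβ : 0 < β) (hβn : β < n)
    (g : EuclideanSpace ℝ (Fin n) → ℝ) (x : EuclideanSpace ℝ (Fin n)) {s : ℝ} (hs : 0 < s) :
    ∫⁻ y in ball x s, ENNReal.ofReal (g y) ≤
      ENNReal.ofReal (s ^ ((n:ℝ) - β)) * morreyNorm n 1 ((n:ℝ)/β) g := by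
  have hn0 : (n:ℝ) ≠ 0 := by positivity
  have hexp : -((n : ℝ) * (1 - 1 / ((n:ℝ)/β))) = β - (n:ℝ) := by field_simp; ring
  have hN : ENNReal.ofReal (s ^ (β - (n:ℝ))) * ∫⁻ y in ball x s, ENNReal.ofReal |g y|
      ≤ morreyNorm n 1 ((n:ℝ)/β) g := by
    refine le_iSup_of_le x ?_
    refine le_iSup_of_le s ?_
    refine le_iSup_of_le hs ?_
    rw [show (1:ℝ)/1 = 1 by norm_num, ENNReal.rpow_one, hexp]
    refine le_of_eq ?_
    congr 1
    refine lintegral_congr fun y => ?_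
    rw [Real.rpow_one]
  have hmono : ∫⁻ y in ball x s, ENNReal.ofReal (g y)
      ≤ ∫⁻ y in ball x s, ENNReal.ofReal |g y| :=
    lintegral_mono fun y => ENNReal.ofReal_le_ofReal (le_abs_self _)
  calc ∫⁻ y in ball x s, ENNReal.ofReal (g y)
      ≤ ∫⁻ y in ball x s, ENNReal.ofReal |g y| := hmono
    _ = ENNReal.ofReal (s ^ ((n:ℝ) - β)) *
        (ENNReal.ofReal (s ^ (β - (n:ℝ))) * ∫⁻ y in ball x s, ENNReal.ofReal |g y|) := by
        rw [← mul_assoc, ← ENNReal.ofReal_mul (Real.rpow_nonneg hs.le _),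
          ← Real.rpow_add hs, show (n:ℝ) - β + (β - n) = 0 by ring, Real.rpow_zero,
          ENNReal.ofReal_one, one_mul]
    _ ≤ _ := mul_le_mul_right hN _

lemma time_integral_le {α β : ℝ} (hα : 0 < α) (hαβ : α < β) {T : ℝ} (hT : 0 < T)
    (h : ℝ → ℝ≥0∞) (A B : ℝ≥0∞)
    (h1 : ∀ t : ℝ, 0 < t → h t ≤ A)
    (h2 : ∀ t : ℝ, 0 < t → h t ≤ ENNReal.ofReal (t ^ (-β/2)) * B) :
    ∫⁻ t in Ioi (0:ℝ), ENNReal.ofReal (t ^ (α/2 - 1)) * h t ≤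
      ENNReal.ofReal (T ^ (α/2) * (2/α)) * A +
        ENNReal.ofReal (T ^ ((α-β)/2) * (2/(β-α))) * B := by
  rw [← Ioc_union_Ioi_eq_Ioi hT.le,
    lintegral_union measurableSet_Ioi (Ioc_disjoint_Ioi le_rfl)]
  have part1 : ∫⁻ t in Ioc (0:ℝ) T, ENNReal.ofReal (t ^ (α/2 - 1)) * h t ≤
      ENNReal.ofReal (T ^ (α/2) * (2/α)) * A := by
    have step : ∫⁻ t in Ioc (0:ℝ) T, ENNReal.ofReal (t ^ (α/2 - 1)) * h t ≤
        ∫⁻ t in Ioc (0:ℝ) T, ENNReal.ofReal (t ^ (α/2 - 1)) * A := by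
      refine setLIntegral_mono (by fun_prop) fun t ht => mul_le_mul_right (h1 t ht.1) _
    refine step.trans ?_
    rw [lintegral_mul_const A (by fun_prop)]
    have hI : IntegrableOn (fun t : ℝ => t ^ (α/2 - 1)) (Ioc (0:ℝ) T) :=
      (intervalIntegral.intervalIntegrable_rpow' (by linarith : (-1:ℝ) < α/2 - 1)).1
    have hval : ∫ t in Ioc (0:ℝ) T, t ^ (α/2 - 1) = T ^ (α/2) * (2/α) := by
      rw [← intervalIntegral.integral_of_le hT.le,
        integral_rpow (Or.inl (by linarith : (-1:ℝ) < α/2 - 1))]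
      rw [show α/2 - 1 + 1 = α/2 by ring, Real.zero_rpow (by positivity : α/2 ≠ 0), sub_zero]
      field_simp
    rw [← hval, ofReal_integral_eq_lintegral_ofReal hI ?_]
    · filter_upwards [ae_restrict_mem measurableSet_Ioc] with t ht
      exact Real.rpow_nonneg ht.1.le _
  have part2 : ∫⁻ t in Ioi T, ENNReal.ofReal (t ^ (α/2 - 1)) * h t ≤
      ENNReal.ofReal (T ^ ((α-β)/2) * (2/(β-α))) * B := by
    have step : ∫⁻ t in Ioi T, ENNReal.ofReal (t ^ (α/2 - 1)) * h t ≤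
        ∫⁻ t in Ioi T, ENNReal.ofReal (t ^ ((α-β)/2 - 1)) * B := by
      refine setLIntegral_mono (by fun_prop) fun t ht => ?_
      have ht0 : 0 < t := hT.trans ht
      calc ENNReal.ofReal (t ^ (α/2 - 1)) * h t
          ≤ ENNReal.ofReal (t ^ (α/2 - 1)) * (ENNReal.ofReal (t ^ (-β/2)) * B) :=
            mul_le_mul_right (h2 t ht0) _
        _ = ENNReal.ofReal (t ^ ((α-β)/2 - 1)) * B := by
            rw [← mul_assoc, ← ENNReal.ofReal_mul (Real.rpow_nonneg ht0.le _),
              ← Real.rpow_add ht0, show α/2 - 1 + -β/2 = (α-β)/2 - 1 by ring]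
    refine step.trans ?_
    rw [lintegral_mul_const B (by fun_prop)]
    have hlt : (α-β)/2 - 1 < -1 := by linarith
    have hI : IntegrableOn (fun t : ℝ => t ^ ((α-β)/2 - 1)) (Ioi T) :=
      integrableOn_Ioi_rpow_of_lt hlt hT
    have hval : ∫ t in Ioi T, t ^ ((α-β)/2 - 1) = T ^ ((α-β)/2) * (2/(β-α)) := by
      rw [integral_Ioi_rpow_of_lt hlt hT, show (α-β)/2 - 1 + 1 = (α-β)/2 by ring]
      have hne : β - α ≠ 0 := by linarith
      have hne' : α - β ≠ 0 := by intro hcon; exact hne (by linarith)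
      field_simp
      ring
    rw [← hval, ofReal_integral_eq_lintegral_ofReal hI ?_]
    · filter_upwards [ae_restrict_mem measurableSet_Ioi] with t ht
      exact Real.rpow_nonneg (hT.trans ht).le _
  exact add_le_add part1 part2

/-- Hedberg-type estimate: for `0 < α < β < n` and `g ≥ 0` in the Morrey space
`Ṁ^{1, n/β}`, one has `I_α g(x) ≤ C(n,α,β) (M_B g(x))^{1-α/β} ‖g‖_{Ṁ^{1,n/β}}^{α/β}`. -/
theorem riesz_le_maximal_morrey (n : ℕ) (hn : 1 ≤ n) (α β : ℝ) (hα : 0 < α) (hαβ : α < β)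
    (hβn : β < n) :
    ∃ C : ℝ, 0 < C ∧ ∀ (g : EuclideanSpace ℝ (Fin n) → ℝ), Measurable g → (∀ y, 0 ≤ g y) →
      morreyNorm n 1 ((n : ℝ) / β) g < ∞ → ∀ x : EuclideanSpace ℝ (Fin n),
      rieszHeat n α g x ≤ ENNReal.ofReal C * (maximalFn n g x) ^ (1 - α / β) *
        (morreyNorm n 1 ((n : ℝ) / β) g) ^ (α / β) := by
  have hβ0 : 0 < β := hα.trans hαβ
  have hβne : β ≠ 0 := ne_of_gt hβ0
  have hn' : (1:ℝ) ≤ (n:ℝ) := by exact_mod_cast hn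
  have hβn' : β < (n:ℝ) := hβn
  set θ : ℝ := α / β with hθdef
  have hθ0 : 0 < θ := div_pos hα hβ0
  have hθ1 : θ < 1 := (div_lt_one hβ0).mpr hαβ
  set v : ℝ≥0∞ := volume (ball (0 : EuclideanSpace ℝ (Fin n)) 1) with hvdef
  have hv0 : v ≠ 0 := (measure_ball_pos volume _ one_pos).ne'
  have hvtop : v ≠ ⊤ := measure_ball_lt_top.ne
  have hvR : 0 < v.toReal := ENNReal.toReal_pos hv0 hvtop
  have hγA : (-2:ℝ) < (n:ℝ) := by linarith
  have hγB : (-2:ℝ) < (n:ℝ) - β := by linarith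
  set KA : ℝ := Kc n (n:ℝ) * v.toReal with hKAdef
  set KB : ℝ := Kc n ((n:ℝ) - β) with hKBdef
  have hKA : 0 < KA := mul_pos (Kc_pos n hγA) hvR
  have hKB : 0 < KB := Kc_pos n hγB
  have hΓ : 0 < Real.Gamma (α/2) := Real.Gamma_pos_of_pos (by linarith)
  set C : ℝ := (Real.Gamma (α/2))⁻¹ * ((2/α + 2/(β-α)) * (KA^(1-θ) * KB^θ)) with hCdef
  have hC : 0 < C := by
    have h1 : (0:ℝ) < 2/α + 2/(β-α) := by
      have : (0:ℝ) < 2/α := by positivity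
      have : (0:ℝ) < 2/(β-α) := by
        apply div_pos two_pos; linarith
      positivity
    have h2 : (0:ℝ) < KA^(1-θ) := Real.rpow_pos_of_pos hKA _
    have h3 : (0:ℝ) < KB^θ := Real.rpow_pos_of_pos hKB _
    positivity
  refine ⟨C, hC, ?_⟩
  intro g hg hg0 hNfin x
  set M : ℝ≥0∞ := maximalFn n g x with hMdef
  set N : ℝ≥0∞ := morreyNorm n 1 ((n:ℝ)/β) g with hNdef
  have hNtop : N ≠ ⊤ := hNfin.ne
  -- two pointwise bounds
  have hA : ∀ t : ℝ, 0 < t → heatConv n t g x ≤ ENNReal.ofReal KA * M := by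
    intro t ht
    have := heatConv_le_bound n ht hγA hg hg0 x (v * M)
      (fun s hs => ball_le_maximal n hn hg0 x hs)
    rw [show ((n:ℝ) - (n:ℝ))/2 = 0 by ring, Real.rpow_zero, mul_one] at this
    refine this.trans (le_of_eq ?_)
    rw [hKAdef, ENNReal.ofReal_mul (Kc_pos n hγA).le, ENNReal.ofReal_toReal hvtop, mul_assoc]
  have hB : ∀ t : ℝ, 0 < t → heatConv n t g x ≤
      ENNReal.ofReal (t ^ (-β/2)) * (ENNReal.ofReal KB * N) := by
    intro t ht
    have := heatConv_le_bound n ht hγB hg hg0 x N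
      (fun s hs => ball_le_morrey n hn hβ0 hβn g x hs)
    rw [show ((n:ℝ) - β - (n:ℝ))/2 = -β/2 by ring] at this
    refine this.trans (le_of_eq ?_)
    rw [ENNReal.ofReal_mul hKB.le, ← mul_assoc, mul_comm (ENNReal.ofReal KB), mul_assoc]
  -- case N = 0
  by_cases hN0 : N = 0
  · have hzero : ∀ t ∈ Ioi (0:ℝ), ENNReal.ofReal (t ^ (α/2 - 1)) * heatConv n t g x = 0 := by
      intro t ht
      rw [mem_Ioi] at ht
      have h := hB t ht
      rw [hN0, mul_zero, mul_zero] at h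
      rw [le_zero_iff.mp h, mul_zero]
    have : rieszHeat n α g x = 0 := by
      unfold rieszHeat
      rw [setLIntegral_congr_fun measurableSet_Ioi
        hzero, lintegral_zero, mul_zero]
    rw [this]
    exact zero_le
  -- case M = 0
  by_cases hM0 : M = 0
  · have hzero : ∀ t ∈ Ioi (0:ℝ), ENNReal.ofReal (t ^ (α/2 - 1)) * heatConv n t g x = 0 := by
      intro t ht
      rw [mem_Ioi] at ht
      have h := hA t ht
      rw [hM0, mul_zero] at h
      rw [le_zero_iff.mp h, mul_zero]
    have : rieszHeat n α g x = 0 := by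
      unfold rieszHeat
      rw [setLIntegral_congr_fun measurableSet_Ioi
        hzero, lintegral_zero, mul_zero]
    rw [this]
    exact zero_le
  -- case M = ⊤
  by_cases hMtop : M = ⊤
  · have h1 : ENNReal.ofReal C ≠ 0 := by
      rw [Ne, ENNReal.ofReal_eq_zero]
      exact not_le.mpr hC
    have h2 : N ^ θ ≠ 0 := by
      intro hcon
      rw [ENNReal.rpow_eq_zero_iff] at hcon
      rcases hcon with ⟨h1', _⟩ | ⟨_, h2'⟩
      · exact hN0 h1'
      · exact absurd h2' (not_lt.mpr hθ0.le)
    have : ENNReal.ofReal C * M ^ (1 - θ) * N ^ θ = ⊤ := by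
      rw [hMtop, ENNReal.top_rpow_of_pos (by linarith), ENNReal.mul_top h1,
        ENNReal.top_mul h2]
    rw [this]
    exact le_top
  -- main case
  have hMR : 0 < M.toReal := ENNReal.toReal_pos hM0 hMtop
  have hNR : 0 < N.toReal := ENNReal.toReal_pos hN0 hNtop
  set a : ℝ := KA * M.toReal with hadef
  set b : ℝ := KB * N.toReal with hbdef
  have ha : 0 < a := mul_pos hKA hMR
  have hb : 0 < b := mul_pos hKB hNR
  have hba : 0 < b / a := div_pos hb ha
  set T : ℝ := (b / a) ^ (2 / β) with hTdef
  have hT : 0 < T := Real.rpow_pos_of_pos hba _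
  have key1 : T ^ (α/2) * a = a ^ (1-θ) * b ^ θ := by
    have e1 : T ^ (α/2) = (b/a) ^ θ := by
      rw [hTdef, ← Real.rpow_mul hba.le]
      congr 1
      rw [hθdef]
      field_simp
    rw [e1, Real.div_rpow hb.le ha.le,
      show (1:ℝ) - θ = 1 - θ from rfl, Real.rpow_sub ha, Real.rpow_one]
    have haθ : (0:ℝ) < a ^ θ := Real.rpow_pos_of_pos ha _
    field_simp
  have key2 : T ^ ((α-β)/2) * b = a ^ (1-θ) * b ^ θ := by
    have e2 : T ^ ((α-β)/2) = (b/a) ^ (θ - 1) := by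
      rw [hTdef, ← Real.rpow_mul hba.le]
      congr 1
      rw [hθdef]
      field_simp
    rw [e2, Real.rpow_sub hba, Real.rpow_one, Real.div_rpow hb.le ha.le,
      Real.rpow_sub ha, Real.rpow_one]
    have haθ : (0:ℝ) < a ^ θ := Real.rpow_pos_of_pos ha _
    have hbθ : (0:ℝ) < b ^ θ := Real.rpow_pos_of_pos hb _
    field_simp
  -- apply the time integral bound
  have hint := time_integral_le hα hαβ hT (fun t => heatConv n t g x)
    (ENNReal.ofReal KA * M) (ENNReal.ofReal KB * N) hA hB
  have hMeq : M = ENNReal.ofReal M.toReal := (ENNReal.ofReal_toReal hMtop).symm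
  have hNeq : N = ENNReal.ofReal N.toReal := (ENNReal.ofReal_toReal hNtop).symm
  have hsum : ENNReal.ofReal (T ^ (α/2) * (2/α)) * (ENNReal.ofReal KA * M) +
      ENNReal.ofReal (T ^ ((α-β)/2) * (2/(β-α))) * (ENNReal.ofReal KB * N)
      = ENNReal.ofReal ((2/α + 2/(β-α)) * (a ^ (1-θ) * b ^ θ)) := by
    have hβα : (0:ℝ) ≤ 2/(β-α) := div_nonneg (by norm_num) (by linarith)
    have nn1 : (0:ℝ) ≤ T ^ (α/2) * (2/α) := by positivity
    have nn2 : (0:ℝ) ≤ T ^ ((α-β)/2) * (2/(β-α)) :=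
      mul_nonneg (Real.rpow_nonneg hT.le _) hβα
    rw [hMeq, hNeq]
    rw [← ENNReal.ofReal_mul hKA.le, ← ENNReal.ofReal_mul nn1,
      ← ENNReal.ofReal_mul hKB.le, ← ENNReal.ofReal_mul nn2,
      ← ENNReal.ofReal_add (by positivity) (by positivity)]
    congr 1
    calc T ^ (α/2) * (2/α) * (KA * M.toReal) + T ^ ((α-β)/2) * (2/(β-α)) * (KB * N.toReal)
        = (2/α) * (T ^ (α/2) * a) + (2/(β-α)) * (T ^ ((α-β)/2) * b) := by
          rw [hadef, hbdef]; ring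
      _ = (2/α + 2/(β-α)) * (a ^ (1-θ) * b ^ θ) := by rw [key1, key2]; ring
  have hw : a ^ (1-θ) * b ^ θ = (KA^(1-θ) * KB^θ) * (M.toReal^(1-θ) * N.toReal^θ) := by
    rw [hadef, hbdef, Real.mul_rpow hKA.le hMR.le, Real.mul_rpow hKB.le hNR.le]
    ring
  have hfinal : rieszHeat n α g x ≤
      (ENNReal.ofReal (Real.Gamma (α/2)))⁻¹ *
        ENNReal.ofReal ((2/α + 2/(β-α)) * (a ^ (1-θ) * b ^ θ)) := by
    unfold rieszHeat
    refine mul_le_mul_right ?_ _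
    rw [← hsum]
    exact hint
  refine hfinal.trans (le_of_eq ?_)
  have hM1 : M ^ (1-θ) = ENNReal.ofReal (M.toReal ^ (1-θ)) := by
    calc M ^ (1-θ) = (ENNReal.ofReal M.toReal) ^ (1-θ) := by rw [← hMeq]
      _ = ENNReal.ofReal (M.toReal ^ (1-θ)) := ENNReal.ofReal_rpow_of_pos hMR
  have hN1 : N ^ θ = ENNReal.ofReal (N.toReal ^ θ) := by
    calc N ^ θ = (ENNReal.ofReal N.toReal) ^ θ := by rw [← hNeq]
      _ = ENNReal.ofReal (N.toReal ^ θ) := ENNReal.ofReal_rpow_of_pos hNR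
  have hCnn : (0:ℝ) ≤ C := hC.le
  rw [hM1, hN1, ← ENNReal.ofReal_mul hCnn,
    ← ENNReal.ofReal_mul (mul_nonneg hCnn (Real.rpow_nonneg hMR.le _)),
    ← ENNReal.ofReal_inv_of_pos hΓ,
    ← ENNReal.ofReal_mul (by positivity : (0:ℝ) ≤ (Real.Gamma (α/2))⁻¹), hw]
  congr 1
  rw [hCdef]
  ring
end

section
/- For a nonnegative function g : ℝⁿ → [0,∞) and 0 < s ≤ n, the thermic Besov norm ‖g‖_{Ḃ^{-s,∞}_∞} = sup_{t>0} t^{s/2} ‖h_t * g‖_{L^∞} is equivalent to the Morrey norm ‖g‖_{Ṁ^{1,n/s}}: there is C = C(n,s) ≥ 1 with C^{-1} ‖g‖_{Ṁ^{1,n/s}} ≤ ‖g‖_{Ḃ^{-s,∞}_∞} ≤ C ‖g‖_{Ṁ^{1,n/s}}. -/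
open MeasureTheory Metric Set ENNReal

/-- Thermic Besov norm `‖g‖_{Ḃ^{-s,∞}_∞} = sup_{t>0} t^{s/2} ‖h_t * g‖_{L^∞}`. -/
noncomputable def besovNorm (n : ℕ) (s : ℝ) (g : EuclideanSpace ℝ (Fin n) → ℝ) : ℝ≥0∞ :=
  ⨆ (t : ℝ) (_ : 0 < t), ENNReal.ofReal (t ^ (s / 2)) *
    ⨆ x : EuclideanSpace ℝ (Fin n), heatConv n t g x

/-! ### Auxiliary lemmas -/

lemma rpow_sq_half {r : ℝ} (hr : 0 < r) (a : ℝ) : ((r ^ 2) : ℝ) ^ (a / 2) = r ^ a := by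
  rw [← Real.rpow_natCast r 2, ← Real.rpow_mul hr.le]
  congr 1; push_cast; ring

lemma core_id (n : ℕ) (s : ℝ) {r : ℝ} (hr : 0 < r) :
    (r ^ 2) ^ (s / 2) * (4 * Real.pi * r ^ 2) ^ (-(n : ℝ) / 2)
      = (4 * Real.pi) ^ (-(n : ℝ) / 2) * r ^ (s - (n : ℝ)) := by
  have h4 : (0:ℝ) ≤ 4 * Real.pi := by positivity
  have h2 : (0:ℝ) ≤ r ^ 2 := by positivity
  rw [Real.mul_rpow h4 h2, rpow_sq_half hr, rpow_sq_half hr,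
    show s - (n:ℝ) = s + (-(n:ℝ)) by ring, Real.rpow_add hr]
  ring

lemma morrey_eq {n : ℕ} (hn : 1 ≤ n) {s : ℝ} (hs : 0 < s)
    (g : EuclideanSpace ℝ (Fin n) → ℝ) (hg : ∀ y, 0 ≤ g y) :
    morreyNorm n 1 ((n : ℝ) / s) g =
      ⨆ (x : EuclideanSpace ℝ (Fin n)) (r : ℝ) (_ : 0 < r),
        ENNReal.ofReal (r ^ (s - (n : ℝ))) * ∫⁻ y in ball x r, ENNReal.ofReal (g y) := by
  have hn0 : ((n : ℝ)) ≠ 0 := by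
    have : (0:ℝ) < n := by exact_mod_cast hn
    exact this.ne'
  have he : -((n : ℝ) * (1 - 1 / ((n : ℝ) / s))) = s - n := by
    field_simp
    ring
  unfold morreyNorm
  refine iSup_congr fun x => iSup_congr fun r => iSup_congr fun hr => ?_
  rw [he, one_div_one, ENNReal.rpow_one]
  congr 1
  exact lintegral_congr fun y => by rw [Real.rpow_one, abs_of_nonneg (hg y)]

lemma morrey_ball {n : ℕ} (hn : 1 ≤ n) {s : ℝ} (hs : 0 < s)
    (g : EuclideanSpace ℝ (Fin n) → ℝ) (hg : ∀ y, 0 ≤ g y)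
    (x : EuclideanSpace ℝ (Fin n)) {r : ℝ} (hr : 0 < r) :
    ∫⁻ y in ball x r, ENNReal.ofReal (g y) ≤
      ENNReal.ofReal (r ^ ((n : ℝ) - s)) * morreyNorm n 1 ((n : ℝ) / s) g := by
  have key : ENNReal.ofReal (r ^ (s - (n:ℝ))) * ∫⁻ y in ball x r, ENNReal.ofReal (g y)
      ≤ morreyNorm n 1 ((n:ℝ)/s) g := by
    rw [morrey_eq hn hs g hg]
    exact le_iSup_of_le x (le_iSup_of_le r (le_iSup_of_le hr le_rfl))
  calc ∫⁻ y in ball x r, ENNReal.ofReal (g y)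
      = ENNReal.ofReal (r ^ ((n:ℝ) - s)) *
        (ENNReal.ofReal (r ^ (s - (n:ℝ))) * ∫⁻ y in ball x r, ENNReal.ofReal (g y)) := by
        rw [← mul_assoc, ← ENNReal.ofReal_mul (by positivity), ← Real.rpow_add hr,
          show ((n:ℝ) - s) + (s - (n:ℝ)) = 0 by ring, Real.rpow_zero, ENNReal.ofReal_one, one_mul]
    _ ≤ _ := mul_le_mul_right key _

/-- Lower bound: the Morrey norm is dominated by the Besov norm. -/
lemma lower_bound (n : ℕ) (hn : 1 ≤ n) (s : ℝ) (hs : 0 < s)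
    (g : EuclideanSpace ℝ (Fin n) → ℝ) (hg : ∀ y, 0 ≤ g y) :
    ENNReal.ofReal ((4 * Real.pi) ^ (-(n : ℝ) / 2) * Real.exp (-(1/4))) *
      morreyNorm n 1 ((n : ℝ) / s) g ≤ besovNorm n s g := by
  rw [morrey_eq hn hs g hg]
  simp_rw [ENNReal.mul_iSup]
  refine iSup_le fun x => iSup_le fun r => iSup_le fun hr => ?_
  have ht : (0:ℝ) < r ^ 2 := by positivity
  set I := ∫⁻ y in ball x r, ENNReal.ofReal (g y) with hI
  set ct : ℝ := (4 * Real.pi * r ^ 2) ^ (-(n : ℝ) / 2) * Real.exp (-(1/4)) with hct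
  have step1 : ENNReal.ofReal ct * I ≤ heatConv n (r ^ 2) g x := by
    have hpt : ∀ y ∈ ball x r,
        ENNReal.ofReal ct * ENNReal.ofReal (g y)
          ≤ ENNReal.ofReal (heatK n (r ^ 2) (x - y) * g y) := by
      intro y hy
      rw [← ENNReal.ofReal_mul (by positivity)]
      apply ENNReal.ofReal_le_ofReal
      apply mul_le_mul_of_nonneg_right _ (hg y)
      unfold heatK
      rw [hct]
      apply mul_le_mul_of_nonneg_left _ (by positivity)
      apply Real.exp_le_exp.2
      have hxy : ‖x - y‖ < r := by
        rw [norm_sub_rev]; exact mem_ball_iff_norm.mp hy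
      rw [neg_div, neg_le_neg_iff, div_le_iff₀ (by positivity)]
      nlinarith [norm_nonneg (x - y)]
    calc ENNReal.ofReal ct * I
        = ∫⁻ y in ball x r, ENNReal.ofReal ct * ENNReal.ofReal (g y) :=
          (lintegral_const_mul' _ _ ENNReal.ofReal_ne_top).symm
      _ ≤ ∫⁻ y in ball x r, ENNReal.ofReal (heatK n (r ^ 2) (x - y) * g y) :=
          setLIntegral_mono' measurableSet_ball hpt
      _ ≤ heatConv n (r ^ 2) g x := setLIntegral_le_lintegral _ _
  have step2 : ENNReal.ofReal ((r ^ 2) ^ (s / 2)) * heatConv n (r ^ 2) g x ≤ besovNorm n s g := by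
    unfold besovNorm
    refine le_iSup_of_le (r ^ 2) (le_iSup_of_le ht ?_)
    exact mul_le_mul_right (le_iSup _ x) _
  refine le_trans ?_ (le_trans (mul_le_mul_right step1 _) step2)
  rw [← mul_assoc, ← mul_assoc]
  refine mul_le_mul_left (le_of_eq ?_) I
  rw [← ENNReal.ofReal_mul (by positivity), ← ENNReal.ofReal_mul (by positivity)]
  congr 1
  rw [hct, show (r ^ 2) ^ (s / 2) * ((4 * Real.pi * r ^ 2) ^ (-(n : ℝ) / 2) * Real.exp (-(1/4)))
      = ((r ^ 2) ^ (s / 2) * (4 * Real.pi * r ^ 2) ^ (-(n : ℝ) / 2)) * Real.exp (-(1/4)) by ring,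
    core_id n s hr]
  ring

/-! ### Dyadic annuli -/

def ann {E : Type*} [PseudoMetricSpace E] (x : E) (r : ℝ) : ℕ → Set E
  | 0 => ball x r
  | (k+1) => ball x (2 ^ (k+1) * r) \ ball x (2 ^ k * r)

lemma ann_subset {E : Type*} [PseudoMetricSpace E] (x : E) (r : ℝ) (k : ℕ) :
    ann x r k ⊆ ball x (2 ^ k * r) := by
  cases k with
  | zero => simp [ann]
  | succ k => exact diff_subset

lemma ann_cover {E : Type*} [PseudoMetricSpace E] (x : E) {r : ℝ} (hr : 0 < r) :
    (⋃ k, ann x r k) = univ := by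
  have hball : ∀ k, ball x (2 ^ k * r) ⊆ ⋃ j, ann x r j := by
    intro k
    induction k with
    | zero => simpa [ann] using subset_iUnion (fun j => ann x r j) 0
    | succ k ih =>
      intro y hy
      by_cases hy2 : y ∈ ball x (2 ^ k * r)
      · exact ih hy2
      · exact subset_iUnion (fun j => ann x r j) (k+1) ⟨hy, hy2⟩
  refine eq_univ_of_forall fun y => ?_
  obtain ⟨k, hk⟩ := pow_unbounded_of_one_lt (dist y x / r) (one_lt_two (α := ℝ))
  exact hball k (mem_ball.2 (by rwa [div_lt_iff₀ hr] at hk))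

lemma ann_measurable {n : ℕ} (x : EuclideanSpace ℝ (Fin n)) (r : ℝ) (k : ℕ) :
    MeasurableSet (ann x r k) := by
  cases k with
  | zero => exact measurableSet_ball
  | succ k => exact measurableSet_ball.diff measurableSet_ball

noncomputable def eFac : ℕ → ℝ
  | 0 => 1
  | (k+1) => Real.exp (-(4:ℝ) ^ k / 4)

lemma eFac_nonneg (k : ℕ) : 0 ≤ eFac k := by
  cases k with
  | zero => norm_num [eFac]
  | succ k => exact (Real.exp_pos _).le

lemma coeff_le (n : ℕ) (hn : 1 ≤ n) (s : ℝ) (hs : 0 < s) (hsn : s ≤ n) (k : ℕ) :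
    (4 * Real.pi) ^ (-(n : ℝ) / 2) * eFac k * ((2:ℝ) ^ k) ^ ((n : ℝ) - s)
      ≤ (n.factorial : ℝ) * 16 ^ n * (1/2) ^ k := by
  have h4 : (1:ℝ) ≤ 4 * Real.pi := by nlinarith [Real.pi_gt_three]
  have hA : (4 * Real.pi) ^ (-(n : ℝ) / 2) ≤ 1 :=
    Real.rpow_le_one_of_one_le_of_nonpos h4
      (by rw [neg_div]; exact neg_nonpos_of_nonneg (by positivity))
  have hA0 : (0:ℝ) ≤ (4 * Real.pi) ^ (-(n : ℝ) / 2) := by positivity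
  have hfac : (1:ℝ) ≤ (n.factorial : ℝ) := by exact_mod_cast n.factorial_pos
  have hB : ∀ m : ℕ, ((2:ℝ) ^ m) ^ ((n : ℝ) - s) ≤ (2:ℝ) ^ (m * n) := by
    intro m
    have h1 : (1:ℝ) ≤ (2:ℝ) ^ m := one_le_pow₀ one_le_two
    calc ((2:ℝ) ^ m) ^ ((n : ℝ) - s) ≤ ((2:ℝ) ^ m) ^ ((n : ℝ)) :=
          Real.rpow_le_rpow_of_exponent_le h1 (by linarith)
      _ = ((2:ℝ) ^ m) ^ (n : ℕ) := Real.rpow_natCast _ n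
      _ = (2:ℝ) ^ (m * n) := (pow_mul 2 m n).symm
  cases k with
  | zero =>
    have hB0 := hB 0
    simp only [eFac, pow_zero, mul_one, one_mul, Nat.zero_mul] at *
    have h16 : (1:ℝ) ≤ 16 ^ n := one_le_pow₀ (by norm_num)
    nlinarith
  | succ k =>
    have hx : (0:ℝ) < (4:ℝ) ^ k / 4 := by positivity
    have hE : Real.exp (-(4:ℝ) ^ k / 4) ≤ (n.factorial : ℝ) * 4 ^ n / 4 ^ (k * n) := by
      have hp : ((4:ℝ) ^ k / 4) ^ n / n.factorial ≤ Real.exp ((4:ℝ) ^ k / 4) :=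
        Real.pow_div_factorial_le_exp _ hx.le n
      rw [show -(4:ℝ) ^ k / 4 = -((4:ℝ) ^ k / 4) by ring, Real.exp_neg]
      have hpos : (0:ℝ) < ((4:ℝ) ^ k / 4) ^ n / n.factorial := by positivity
      refine (inv_anti₀ hpos hp).trans (le_of_eq ?_)
      rw [inv_div, div_pow, ← pow_mul, div_div_eq_mul_div]
    have hEF : eFac (k+1) = Real.exp (-(4:ℝ) ^ k / 4) := rfl
    have hL : (4 * Real.pi) ^ (-(n : ℝ) / 2) * eFac (k+1) * ((2:ℝ) ^ (k+1)) ^ ((n : ℝ) - s)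
        ≤ 1 * ((n.factorial : ℝ) * 4 ^ n / 4 ^ (k * n)) * (2:ℝ) ^ ((k+1) * n) := by
      refine mul_le_mul (mul_le_mul hA (hEF ▸ hE) (eFac_nonneg _) zero_le_one)
        (hB (k+1)) (by positivity) (by positivity)
    refine hL.trans ?_
    rw [one_mul, div_mul_eq_mul_div, one_div, inv_pow, ← one_div, mul_one_div,
      div_le_div_iff₀ (by positivity) (by positivity)]
    rw [show (4:ℝ) = 2 ^ 2 by norm_num, show (16:ℝ) = 2 ^ 4 by norm_num,
      ← pow_mul, ← pow_mul, ← pow_mul]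
    calc (n.factorial : ℝ) * 2 ^ (2 * n) * 2 ^ ((k+1) * n) * 2 ^ (k+1)
        = (n.factorial : ℝ) * 2 ^ (2 * n + (k+1) * n + (k+1)) := by
          rw [pow_add, pow_add]; ring
      _ ≤ (n.factorial : ℝ) * 2 ^ (4 * n + 2 * (k * n)) := by
          have hkn : k * 1 ≤ k * n := Nat.mul_le_mul_left k hn
          refine mul_le_mul_of_nonneg_left
            (pow_le_pow_right₀ one_le_two (by rw [add_mul, one_mul]; omega)) (by positivity)
      _ = (n.factorial : ℝ) * 2 ^ (4 * n) * 2 ^ (2 * (k * n)) := by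
          rw [pow_add]; ring

lemma coeff_id (n : ℕ) (s : ℝ) {r : ℝ} (hr : 0 < r) (E : ℝ) (k : ℕ) :
    (r ^ 2) ^ (s / 2) * ((4 * Real.pi * r ^ 2) ^ (-(n : ℝ) / 2) * E) *
      ((2 ^ k * r) ^ ((n : ℝ) - s))
      = (4 * Real.pi) ^ (-(n : ℝ) / 2) * E * ((2:ℝ) ^ k) ^ ((n : ℝ) - s) := by
  have h1 : ((2:ℝ) ^ k * r) ^ ((n : ℝ) - s) = ((2:ℝ) ^ k) ^ ((n : ℝ) - s) * r ^ ((n : ℝ) - s) :=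
    Real.mul_rpow (by positivity) hr.le
  rw [h1, show (r ^ 2) ^ (s / 2) * ((4 * Real.pi * r ^ 2) ^ (-(n : ℝ) / 2) * E) *
      (((2:ℝ) ^ k) ^ ((n : ℝ) - s) * r ^ ((n : ℝ) - s))
      = ((r ^ 2) ^ (s / 2) * (4 * Real.pi * r ^ 2) ^ (-(n : ℝ) / 2)) *
        (r ^ ((n : ℝ) - s) * (E * ((2:ℝ) ^ k) ^ ((n : ℝ) - s))) by ring,
    core_id n s hr,
    show (4 * Real.pi) ^ (-(n : ℝ) / 2) * r ^ (s - (n:ℝ)) *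
        (r ^ ((n : ℝ) - s) * (E * ((2:ℝ) ^ k) ^ ((n : ℝ) - s)))
      = (r ^ (s - (n:ℝ)) * r ^ ((n : ℝ) - s)) *
        ((4 * Real.pi) ^ (-(n : ℝ) / 2) * (E * ((2:ℝ) ^ k) ^ ((n : ℝ) - s))) by ring,
    ← Real.rpow_add hr, show s - (n:ℝ) + ((n:ℝ) - s) = 0 by ring, Real.rpow_zero]
  ring

/-- Upper bound: the Besov norm is dominated by the Morrey norm. -/
lemma upper_bound (n : ℕ) (hn : 1 ≤ n) (s : ℝ) (hs : 0 < s) (hsn : s ≤ n)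
    (g : EuclideanSpace ℝ (Fin n) → ℝ) (hg : ∀ y, 0 ≤ g y) :
    besovNorm n s g ≤
      ENNReal.ofReal (2 * ((n.factorial : ℝ) * 16 ^ n)) * morreyNorm n 1 ((n : ℝ) / s) g := by
  set M := morreyNorm n 1 ((n : ℝ) / s) g with hM
  refine iSup_le fun t => iSup_le fun ht => ?_
  obtain ⟨r, hr, rfl⟩ : ∃ r : ℝ, 0 < r ∧ t = r ^ 2 :=
    ⟨Real.sqrt t, Real.sqrt_pos.2 ht, (Real.sq_sqrt ht.le).symm⟩
  rw [ENNReal.mul_iSup]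
  refine iSup_le fun x => ?_
  have hKb : ∀ k, ∀ y ∈ ann x r k,
      heatK n (r ^ 2) (x - y) ≤ (4 * Real.pi * r ^ 2) ^ (-(n:ℝ)/2) * eFac k := by
    intro k y hy
    unfold heatK
    apply mul_le_mul_of_nonneg_left _ (by positivity)
    cases k with
    | zero =>
      show Real.exp _ ≤ (1:ℝ)
      rw [Real.exp_le_one_iff, neg_div]
      exact neg_nonpos_of_nonneg (by positivity)
    | succ k =>
      obtain ⟨hy1, hy2⟩ := hy
      have hd : 2 ^ k * r ≤ ‖x - y‖ := by
        rw [norm_sub_rev, ← dist_eq_norm]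
        simpa [mem_ball, not_lt] using hy2
      show Real.exp _ ≤ Real.exp _
      apply Real.exp_le_exp.2
      have hsq : ((2:ℝ) ^ k * r) ^ 2 ≤ ‖x - y‖ ^ 2 := pow_le_pow_left₀ (by positivity) hd 2
      have h2k : (((2:ℝ) ^ k) * r) ^ 2 = 4 ^ k * r ^ 2 := by
        rw [mul_pow, ← pow_mul, show (4:ℝ) = 2 ^ 2 by norm_num, ← pow_mul, mul_comm 2 k]
      rw [neg_div, neg_div, neg_le_neg_iff, div_le_div_iff₀ (by norm_num) (by positivity)]
      nlinarith
  have hann : ∀ k, (∫⁻ y in ann x r k, ENNReal.ofReal (heatK n (r ^ 2) (x - y) * g y))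
      ≤ ENNReal.ofReal ((4 * Real.pi * r ^ 2) ^ (-(n:ℝ)/2) * eFac k) *
        (ENNReal.ofReal ((2 ^ k * r) ^ ((n:ℝ) - s)) * M) := by
    intro k
    have hc0 : (0:ℝ) ≤ (4 * Real.pi * r ^ 2) ^ (-(n:ℝ)/2) * eFac k := by
      have := eFac_nonneg k
      positivity
    calc ∫⁻ y in ann x r k, ENNReal.ofReal (heatK n (r ^ 2) (x - y) * g y)
        ≤ ∫⁻ y in ann x r k,
            ENNReal.ofReal (((4 * Real.pi * r ^ 2) ^ (-(n:ℝ)/2) * eFac k) * g y) :=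
          setLIntegral_mono' (ann_measurable x r k) fun y hy => ENNReal.ofReal_le_ofReal
            (mul_le_mul_of_nonneg_right (hKb k y hy) (hg y))
      _ = ENNReal.ofReal ((4 * Real.pi * r ^ 2) ^ (-(n:ℝ)/2) * eFac k) *
            ∫⁻ y in ann x r k, ENNReal.ofReal (g y) := by
          simp_rw [ENNReal.ofReal_mul hc0]
          exact lintegral_const_mul' _ _ ENNReal.ofReal_ne_top
      _ ≤ ENNReal.ofReal ((4 * Real.pi * r ^ 2) ^ (-(n:ℝ)/2) * eFac k) *
            ∫⁻ y in ball x (2 ^ k * r), ENNReal.ofReal (g y) :=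
          mul_le_mul_right (lintegral_mono_set (ann_subset x r k)) _
      _ ≤ _ := mul_le_mul_right (morrey_ball hn hs g hg x (by positivity)) _
  calc ENNReal.ofReal ((r ^ 2) ^ (s / 2)) * heatConv n (r ^ 2) g x
      ≤ ENNReal.ofReal ((r ^ 2) ^ (s / 2)) *
          ∑' k, ∫⁻ y in ann x r k, ENNReal.ofReal (heatK n (r ^ 2) (x - y) * g y) := by
        refine mul_le_mul_right ?_ _
        unfold heatConv
        rw [← setLIntegral_univ, ← ann_cover x hr]
        exact lintegral_iUnion_le _ _
    _ ≤ ∑' k, ENNReal.ofReal ((r ^ 2) ^ (s / 2)) *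
          (ENNReal.ofReal ((4 * Real.pi * r ^ 2) ^ (-(n:ℝ)/2) * eFac k) *
            (ENNReal.ofReal ((2 ^ k * r) ^ ((n:ℝ) - s)) * M)) := by
        rw [← ENNReal.tsum_mul_left]
        exact ENNReal.tsum_le_tsum fun k => mul_le_mul_right (hann k) _
    _ ≤ ∑' k, ENNReal.ofReal ((n.factorial : ℝ) * 16 ^ n * (1/2) ^ k) * M := by
        refine ENNReal.tsum_le_tsum fun k => ?_
        rw [← mul_assoc, ← mul_assoc]
        refine mul_le_mul_left ?_ M
        have he := eFac_nonneg k
        rw [← ENNReal.ofReal_mul (by positivity), ← ENNReal.ofReal_mul (by positivity)]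
        refine ENNReal.ofReal_le_ofReal ?_
        rw [coeff_id n s hr (eFac k) k]
        exact coeff_le n hn s hs hsn k
    _ = ENNReal.ofReal (2 * ((n.factorial : ℝ) * 16 ^ n)) * M := by
        rw [ENNReal.tsum_mul_right]
        congr 1
        rw [← ENNReal.ofReal_tsum_of_nonneg (fun k => by positivity)
            (summable_geometric_two.mul_left _)]
        congr 1
        rw [tsum_mul_left, tsum_geometric_two]
        ring

/-- for nonnegative `g` and `0 < s ≤ n`, the thermic Besov norm
`‖g‖_{Ḃ^{-s,∞}_∞}` is equivalent to the Morrey norm `‖g‖_{Ṁ^{1,n/s}}`. -/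
theorem besov_equiv_morrey (n : ℕ) (hn : 1 ≤ n) (s : ℝ) (hs : 0 < s) (hsn : s ≤ n) :
    ∃ C : ℝ, 1 ≤ C ∧ ∀ (g : EuclideanSpace ℝ (Fin n) → ℝ), Measurable g → (∀ y, 0 ≤ g y) →
      (ENNReal.ofReal C)⁻¹ * morreyNorm n 1 ((n : ℝ) / s) g ≤ besovNorm n s g ∧
      besovNorm n s g ≤ ENNReal.ofReal C * morreyNorm n 1 ((n : ℝ) / s) g := by
  set B : ℝ := (4 * Real.pi) ^ ((n : ℝ) / 2) * Real.exp (1/4) with hB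
  set D : ℝ := 2 * ((n.factorial : ℝ) * 16 ^ n) with hD
  have hBpos : 0 < B := by positivity
  have hDbig : (2:ℝ) ≤ D := by
    have hfac : (1:ℝ) ≤ (n.factorial : ℝ) := by exact_mod_cast n.factorial_pos
    have h16 : (1:ℝ) ≤ 16 ^ n := one_le_pow₀ (by norm_num)
    nlinarith
  refine ⟨B + D, by nlinarith, fun g hmg hg => ?_⟩
  have hCpos : 0 < B + D := by nlinarith
  constructor
  · -- lower bound
    have hc : ((4 * Real.pi) ^ (-(n : ℝ) / 2) * Real.exp (-(1/4))) = B⁻¹ := by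
      rw [hB, mul_inv, ← Real.exp_neg, ← Real.rpow_neg (by positivity), neg_div]
    have hinv : (B + D)⁻¹ ≤ (4 * Real.pi) ^ (-(n : ℝ) / 2) * Real.exp (-(1/4)) := by
      rw [hc]
      exact inv_anti₀ hBpos (by nlinarith)
    calc (ENNReal.ofReal (B + D))⁻¹ * morreyNorm n 1 ((n : ℝ) / s) g
        = ENNReal.ofReal ((B + D)⁻¹) * morreyNorm n 1 ((n : ℝ) / s) g := by
          rw [ENNReal.ofReal_inv_of_pos hCpos]
      _ ≤ ENNReal.ofReal ((4 * Real.pi) ^ (-(n : ℝ) / 2) * Real.exp (-(1/4))) *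
            morreyNorm n 1 ((n : ℝ) / s) g :=
          mul_le_mul_left (ENNReal.ofReal_le_ofReal hinv) _
      _ ≤ besovNorm n s g := lower_bound n hn s hs g hg
  · -- upper bound
    refine (upper_bound n hn s hs hsn g hg).trans ?_
    refine mul_le_mul_left (ENNReal.ofReal_le_ofReal ?_) _
    rw [← hD]
    nlinarith
end

section
/- Let 0 < α < β, let g : ℝⁿ → [0,∞) be measurable with M := M_B g(x) < ∞ for a fixed x, and suppose sup_{t>0} t^{β/2}(h_t * g)(x) ≤ A < ∞. Then Γ(α/2) I_α g(x) = ∫_0^∞ t^{α/2−1}(h_t*g)(x) dt ≤ C(n,α,β) M^{1−α/β} A^{α/β}, where h_t is the heat kernel and the small-time part of the integral is bounded using (h_t*g)(x) ≤ C(n) M and the large-time part using (h_t*g)(x) ≤ A t^{-β/2}. -/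
open MeasureTheory Metric Set ENNReal

lemma gauss_dom (t : ℝ) (ht : 0 < t) (u : ℝ) (hu : 0 ≤ u) :
    ENNReal.ofReal (Real.exp (-u ^ 2 / (4 * t))) ≤
      ∑' k : ℕ, (if u < ((k : ℝ) + 1) * Real.sqrt t then
        ENNReal.ofReal (Real.exp ((1 - (k : ℝ) ^ 2) / 4)) else 0) := by
  have hst : 0 < Real.sqrt t := Real.sqrt_pos.2 ht
  set k := ⌊u / Real.sqrt t⌋₊ with hk
  have h1 : u < ((k : ℝ) + 1) * Real.sqrt t := by
    have := Nat.lt_floor_add_one (u / Real.sqrt t)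
    calc u = (u / Real.sqrt t) * Real.sqrt t := by field_simp
    _ < ((k : ℝ) + 1) * Real.sqrt t := by
        apply mul_lt_mul_of_pos_right _ hst
        exact_mod_cast this
  have h2 : (k : ℝ) * Real.sqrt t ≤ u := by
    have := Nat.floor_le (div_nonneg hu hst.le)
    calc (k : ℝ) * Real.sqrt t ≤ (u / Real.sqrt t) * Real.sqrt t :=
      mul_le_mul_of_nonneg_right this hst.le
    _ = u := by field_simp
  refine le_trans ?_ (ENNReal.le_tsum k)
  rw [if_pos h1]
  apply ENNReal.ofReal_le_ofReal
  apply Real.exp_le_exp.2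
  have hsq : (k : ℝ) ^ 2 * t ≤ u ^ 2 := by
    have h3 : ((k : ℝ) * Real.sqrt t) ^ 2 ≤ u ^ 2 := by
      apply sq_le_sq' _ h2
      nlinarith [mul_nonneg (Nat.cast_nonneg k : (0:ℝ) ≤ k) hst.le]
    calc (k : ℝ) ^ 2 * t = ((k : ℝ) * Real.sqrt t) ^ 2 := by
          rw [mul_pow, Real.sq_sqrt ht.le]
    _ ≤ u ^ 2 := h3
  rw [div_le_div_iff₀ (by positivity) (by norm_num)]
  nlinarith

lemma term_le (n k : ℕ) :
    ((k : ℝ) + 1) ^ n * Real.exp ((1 - (k : ℝ) ^ 2) / 4) ≤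
      Real.exp (1 / 4 + ((n : ℝ) + 1) ^ 2) * Real.exp (-1) ^ k := by
  have h1 : ((k : ℝ) + 1) ^ n ≤ Real.exp ((k : ℝ) * n) := by
    calc ((k : ℝ) + 1) ^ n ≤ (Real.exp k) ^ n := by
          apply pow_le_pow_left₀ (by positivity)
          linarith [Real.add_one_le_exp (k : ℝ)]
    _ = Real.exp ((k : ℝ) * n) := by rw [← Real.exp_nat_mul, mul_comm]
  have h2 : Real.exp (-1) ^ k = Real.exp (-(k : ℝ)) := by
    rw [← Real.exp_nat_mul]; ring_nf
  rw [h2, ← Real.exp_add]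
  calc ((k : ℝ) + 1) ^ n * Real.exp ((1 - (k : ℝ) ^ 2) / 4)
      ≤ Real.exp ((k : ℝ) * n) * Real.exp ((1 - (k : ℝ) ^ 2) / 4) := by
        apply mul_le_mul_of_nonneg_right h1 (Real.exp_nonneg _)
    _ = Real.exp ((k : ℝ) * n + (1 - (k : ℝ) ^ 2) / 4) := by rw [← Real.exp_add]
    _ ≤ Real.exp (1 / 4 + ((n : ℝ) + 1) ^ 2 + -(k : ℝ)) := by
        apply Real.exp_le_exp.2
        nlinarith [sq_nonneg ((k : ℝ) / 2 - ((n : ℝ) + 1))]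

lemma tsum_term_le (n : ℕ) :
    (∑' k : ℕ, ENNReal.ofReal (((k : ℝ) + 1) ^ n * Real.exp ((1 - (k : ℝ) ^ 2) / 4))) ≤
      ENNReal.ofReal (Real.exp (1 / 4 + ((n : ℝ) + 1) ^ 2) * (1 - Real.exp (-1))⁻¹) := by
  have he : Real.exp (-1) < 1 := Real.exp_lt_one_iff.2 (by norm_num)
  calc (∑' k : ℕ, ENNReal.ofReal (((k : ℝ) + 1) ^ n * Real.exp ((1 - (k : ℝ) ^ 2) / 4)))
      ≤ ∑' k : ℕ, ENNReal.ofReal (Real.exp (1 / 4 + ((n : ℝ) + 1) ^ 2)) *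
          ENNReal.ofReal (Real.exp (-1)) ^ k := by
        apply ENNReal.tsum_le_tsum
        intro k
        rw [← ENNReal.ofReal_pow (Real.exp_nonneg _), ← ENNReal.ofReal_mul (Real.exp_nonneg _)]
        exact ENNReal.ofReal_le_ofReal (term_le n k)
    _ = ENNReal.ofReal (Real.exp (1 / 4 + ((n : ℝ) + 1) ^ 2)) *
          (1 - ENNReal.ofReal (Real.exp (-1)))⁻¹ := by
        rw [ENNReal.tsum_mul_left, ENNReal.tsum_geometric]
    _ = ENNReal.ofReal (Real.exp (1 / 4 + ((n : ℝ) + 1) ^ 2) * (1 - Real.exp (-1))⁻¹) := by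
        rw [← ENNReal.ofReal_one, ← ENNReal.ofReal_sub _ (Real.exp_nonneg _),
          ← ENNReal.ofReal_inv_of_pos (by linarith), ← ENNReal.ofReal_mul (Real.exp_nonneg _)]

lemma ball_integral_le (n : ℕ) (g : EuclideanSpace ℝ (Fin n) → ℝ) (hg0 : ∀ y, 0 ≤ g y)
    (x : EuclideanSpace ℝ (Fin n)) (M : ℝ)
    (hM : maximalFn n g x ≤ ENNReal.ofReal M) (R : ℝ) (hR : 0 < R) :
    ∫⁻ y in ball x R, ENNReal.ofReal (g y) ≤ ENNReal.ofReal M * volume (ball x R) := by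
  have habs : ∀ y, |g y| = g y := fun y => abs_of_nonneg (hg0 y)
  have h0 : (volume (ball x R))⁻¹ * ∫⁻ y in ball x R, ENNReal.ofReal (g y) ≤
      maximalFn n g x := by
    have : (volume (ball x R))⁻¹ * ∫⁻ y in ball x R, ENNReal.ofReal (|g y|) ≤
        maximalFn n g x :=
      le_iSup_of_le x (le_iSup_of_le R (le_iSup_of_le hR
        (le_iSup_of_le (mem_ball_self hR) le_rfl)))
    simpa [habs] using this
  have hv0 : volume (ball x R) ≠ 0 := (measure_ball_pos volume x hR).ne'
  have hvt : volume (ball x R) ≠ ⊤ := measure_ball_lt_top.ne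
  calc ∫⁻ y in ball x R, ENNReal.ofReal (g y)
      = volume (ball x R) * ((volume (ball x R))⁻¹ *
          ∫⁻ y in ball x R, ENNReal.ofReal (g y)) := by
        rw [← mul_assoc, ENNReal.mul_inv_cancel hv0 hvt, one_mul]
    _ ≤ volume (ball x R) * ENNReal.ofReal M :=
        mul_le_mul_right (h0.trans hM) _
    _ = ENNReal.ofReal M * volume (ball x R) := mul_comm _ _

lemma conv_le (n : ℕ) (hn : 1 ≤ n) :
    ∃ C₁ : ℝ, 0 < C₁ ∧ ∀ (g : EuclideanSpace ℝ (Fin n) → ℝ), Measurable g →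
      (∀ y, 0 ≤ g y) → ∀ (x : EuclideanSpace ℝ (Fin n)) (M : ℝ), 0 ≤ M →
      maximalFn n g x ≤ ENNReal.ofReal M →
      ∀ t : ℝ, 0 < t → heatConv n t g x ≤ ENNReal.ofReal (C₁ * M) := by
  haveI : NeZero n := ⟨by omega⟩
  set V : ℝ≥0∞ := volume (ball (0 : EuclideanSpace ℝ (Fin n)) 1) with hV
  have hV0 : V ≠ 0 := (measure_ball_pos volume _ one_pos).ne'
  have hVt : V ≠ ⊤ := measure_ball_lt_top.ne
  have hVr : 0 < V.toReal := ENNReal.toReal_pos hV0 hVt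
  set D : ℝ := Real.exp (1 / 4 + ((n : ℝ) + 1) ^ 2) * (1 - Real.exp (-1))⁻¹ with hD
  have hD0 : 0 < D := by
    have he : Real.exp (-1) < 1 := Real.exp_lt_one_iff.2 (by norm_num)
    apply mul_pos (Real.exp_pos _)
    exact inv_pos.2 (by linarith)
  set c0 : ℝ := (4 * Real.pi) ^ (-(n : ℝ) / 2) with hc0
  have hc00 : 0 < c0 := Real.rpow_pos_of_pos (by positivity) _
  refine ⟨c0 * D * V.toReal, by positivity, ?_⟩
  intro g hgm hg0 x M hM0 hM t ht
  have hst : 0 < Real.sqrt t := Real.sqrt_pos.2 ht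
  set R : ℕ → ℝ := fun k => ((k : ℝ) + 1) * Real.sqrt t with hR
  have hRpos : ∀ k, 0 < R k := fun k => by
    have : (0:ℝ) < (k : ℝ) + 1 := by positivity
    exact mul_pos this hst
  set a : ℕ → ℝ := fun k => Real.exp ((1 - (k : ℝ) ^ 2) / 4) with ha
  set ct : ℝ := (4 * Real.pi * t) ^ (-(n : ℝ) / 2) with hct
  have hct0 : 0 ≤ ct := Real.rpow_nonneg (by positivity) _
  set F : ℕ → EuclideanSpace ℝ (Fin n) → ℝ≥0∞ :=
    fun k y => (ball x (R k)).indicator (fun _ => ENNReal.ofReal (a k)) y *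
      ENNReal.ofReal (g y) with hF
  -- pointwise bound on the integrand
  have hpt : ∀ y, ENNReal.ofReal (heatK n t (x - y) * g y) ≤
      ENNReal.ofReal ct * ∑' k, F k y := by
    intro y
    have h1 : ENNReal.ofReal (heatK n t (x - y) * g y) =
        ENNReal.ofReal ct * (ENNReal.ofReal (Real.exp (-‖x - y‖ ^ 2 / (4 * t))) *
          ENNReal.ofReal (g y)) := by
      rw [heatK, mul_assoc, ENNReal.ofReal_mul hct0,
        ENNReal.ofReal_mul (Real.exp_nonneg _)]
    rw [h1]
    apply mul_le_mul_right
    have h2 : (ENNReal.ofReal (Real.exp (-‖x - y‖ ^ 2 / (4 * t))) *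
        ENNReal.ofReal (g y)) ≤
        (∑' k : ℕ, (if ‖x - y‖ < ((k : ℝ) + 1) * Real.sqrt t then
          ENNReal.ofReal (a k) else 0)) * ENNReal.ofReal (g y) :=
      mul_le_mul_left (gauss_dom t ht _ (norm_nonneg _)) _
    refine h2.trans (le_of_eq ?_)
    rw [ENNReal.tsum_mul_right]
    congr 1
    refine tsum_congr fun k => ?_
    have hmem : y ∈ ball x (R k) ↔ ‖x - y‖ < R k := by
      rw [mem_ball, dist_comm, dist_eq_norm]
    by_cases h : ‖x - y‖ < R k
    · rw [if_pos h, Set.indicator_of_mem (hmem.2 h)]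
    · rw [if_neg h, Set.indicator_of_notMem (fun hy => h (hmem.1 hy))]
  -- integrate
  have hFm : ∀ k, AEMeasurable (F k) volume := by
    intro k
    apply AEMeasurable.mul
    · exact (measurable_const.indicator measurableSet_ball).aemeasurable
    · exact (ENNReal.measurable_ofReal.comp hgm).aemeasurable
  have hint : heatConv n t g x ≤
      ENNReal.ofReal ct * ∑' k, ∫⁻ y, F k y := by
    calc heatConv n t g x ≤ ∫⁻ y, ENNReal.ofReal ct * ∑' k, F k y :=
          lintegral_mono hpt
      _ = ENNReal.ofReal ct * ∫⁻ y, ∑' k, F k y :=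
          lintegral_const_mul' _ _ ENNReal.ofReal_ne_top
      _ = ENNReal.ofReal ct * ∑' k, ∫⁻ y, F k y := by rw [lintegral_tsum hFm]
  -- evaluate each term
  have hterm : ∀ k, ∫⁻ y, F k y ≤
      ENNReal.ofReal (a k * (R k) ^ n) * (ENNReal.ofReal M * V) := by
    intro k
    have h1 : ∫⁻ y, F k y =
        ENNReal.ofReal (a k) * ∫⁻ y in ball x (R k), ENNReal.ofReal (g y) := by
      have : ∀ y, F k y = (ball x (R k)).indicator
          (fun y => ENNReal.ofReal (a k) * ENNReal.ofReal (g y)) y := by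
        intro y
        by_cases h : y ∈ ball x (R k)
        · simp only [F, Set.indicator_of_mem h]
        · simp only [F, Set.indicator_of_notMem h, zero_mul]
      simp_rw [this]
      rw [lintegral_indicator measurableSet_ball,
        lintegral_const_mul' _ _ ENNReal.ofReal_ne_top]
    rw [h1]
    have h2 := ball_integral_le n g hg0 x M hM (R k) (hRpos k)
    have h3 : volume (ball x (R k)) = ENNReal.ofReal ((R k) ^ n) * V := by
      rw [Measure.addHaar_ball volume x (hRpos k).le, finrank_euclideanSpace_fin]
    calc ENNReal.ofReal (a k) * ∫⁻ y in ball x (R k), ENNReal.ofReal (g y)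
        ≤ ENNReal.ofReal (a k) * (ENNReal.ofReal M * volume (ball x (R k))) :=
          mul_le_mul_right h2 _
      _ = ENNReal.ofReal (a k * (R k) ^ n) * (ENNReal.ofReal M * V) := by
          rw [h3, ENNReal.ofReal_mul (Real.exp_nonneg _)]
          ring
  -- sum up
  have hsum : (∑' k, ∫⁻ y, F k y) ≤
      ENNReal.ofReal (t ^ ((n : ℝ) / 2) * D) * (ENNReal.ofReal M * V) := by
    have hRk : ∀ k, a k * (R k) ^ n = (((k : ℝ) + 1) ^ n * a k) * t ^ ((n : ℝ) / 2) := by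
      intro k
      have hsqrt : (Real.sqrt t) ^ n = t ^ ((n : ℝ) / 2) := by
        rw [Real.sqrt_eq_rpow, ← Real.rpow_natCast (t ^ ((1:ℝ)/2)) n,
          ← Real.rpow_mul ht.le, show (1/2 : ℝ) * n = (n : ℝ) / 2 by ring]
      show a k * (((k : ℝ) + 1) * Real.sqrt t) ^ n = _
      rw [mul_pow, hsqrt]; ring
    calc (∑' k, ∫⁻ y, F k y)
        ≤ ∑' k, ENNReal.ofReal (a k * (R k) ^ n) * (ENNReal.ofReal M * V) :=
          ENNReal.tsum_le_tsum hterm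
      _ = (∑' k : ℕ, ENNReal.ofReal (a k * (R k) ^ n)) * (ENNReal.ofReal M * V) :=
          ENNReal.tsum_mul_right
      _ = (∑' k : ℕ, ENNReal.ofReal (((k : ℝ) + 1) ^ n * a k)) *
            ENNReal.ofReal (t ^ ((n : ℝ) / 2)) * (ENNReal.ofReal M * V) := by
          have heq : (∑' k : ℕ, ENNReal.ofReal (a k * (R k) ^ n)) =
              (∑' k : ℕ, ENNReal.ofReal (((k : ℝ) + 1) ^ n * a k)) *
                ENNReal.ofReal (t ^ ((n : ℝ) / 2)) := by
            rw [← ENNReal.tsum_mul_right]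
            refine tsum_congr fun k => ?_
            rw [← ENNReal.ofReal_mul (by positivity), hRk k]
          rw [heq]
      _ ≤ ENNReal.ofReal D * ENNReal.ofReal (t ^ ((n : ℝ) / 2)) *
            (ENNReal.ofReal M * V) := by
          apply mul_le_mul_left
          exact mul_le_mul_left (tsum_term_le n) _
      _ = ENNReal.ofReal (t ^ ((n : ℝ) / 2) * D) * (ENNReal.ofReal M * V) := by
          rw [← ENNReal.ofReal_mul hD0.le, mul_comm D]
  -- final computation
  have hcancel : ct * (t ^ ((n : ℝ) / 2) * D) = c0 * D := by
    rw [hct, hc0, Real.mul_rpow (by positivity) ht.le]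
    have : t ^ (-(n : ℝ) / 2) * t ^ ((n : ℝ) / 2) = 1 := by
      rw [← Real.rpow_add ht, show -(n : ℝ) / 2 + (n : ℝ) / 2 = 0 by ring,
        Real.rpow_zero]
    calc (4 * Real.pi) ^ (-(n : ℝ) / 2) * t ^ (-(n : ℝ) / 2) *
          (t ^ ((n : ℝ) / 2) * D)
        = (4 * Real.pi) ^ (-(n : ℝ) / 2) *
          (t ^ (-(n : ℝ) / 2) * t ^ ((n : ℝ) / 2)) * D := by ring
      _ = (4 * Real.pi) ^ (-(n : ℝ) / 2) * D := by rw [this]; ring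
  calc heatConv n t g x ≤ ENNReal.ofReal ct *
        (ENNReal.ofReal (t ^ ((n : ℝ) / 2) * D) * (ENNReal.ofReal M * V)) :=
        hint.trans (mul_le_mul_right hsum _)
    _ = ENNReal.ofReal ct * (ENNReal.ofReal (t ^ ((n : ℝ) / 2) * D) *
          (ENNReal.ofReal M * ENNReal.ofReal V.toReal)) := by
        rw [ENNReal.ofReal_toReal hVt]
    _ = ENNReal.ofReal (ct * (t ^ ((n : ℝ) / 2) * D * (M * V.toReal))) := by
        rw [ENNReal.ofReal_mul hct0, ENNReal.ofReal_mul
          (mul_nonneg (Real.rpow_nonneg ht.le _) hD0.le), ENNReal.ofReal_mul hM0]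
    _ = ENNReal.ofReal (c0 * D * V.toReal * M) := by
        congr 1
        linear_combination (M * V.toReal) * hcancel

lemma heatConv_large_time (n : ℕ) (β : ℝ) (g : EuclideanSpace ℝ (Fin n) → ℝ)
    (x : EuclideanSpace ℝ (Fin n)) (A : ℝ)
    (hsup : ∀ t : ℝ, 0 < t → ENNReal.ofReal (t ^ (β / 2)) * heatConv n t g x ≤
      ENNReal.ofReal A) (t : ℝ) (ht : 0 < t) :
    heatConv n t g x ≤ ENNReal.ofReal (A * t ^ (-(β / 2))) := by
  have hb : (0:ℝ) < t ^ (β / 2) := Real.rpow_pos_of_pos ht _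
  have hb0 : ENNReal.ofReal (t ^ (β / 2)) ≠ 0 := (ENNReal.ofReal_pos.2 hb).ne'
  have hbt : ENNReal.ofReal (t ^ (β / 2)) ≠ ⊤ := ENNReal.ofReal_ne_top
  calc heatConv n t g x
      = (ENNReal.ofReal (t ^ (β / 2)))⁻¹ *
          (ENNReal.ofReal (t ^ (β / 2)) * heatConv n t g x) := by
        rw [← mul_assoc, ENNReal.inv_mul_cancel hb0 hbt, one_mul]
    _ ≤ (ENNReal.ofReal (t ^ (β / 2)))⁻¹ * ENNReal.ofReal A :=
        mul_le_mul_right (hsup t ht) _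
    _ = ENNReal.ofReal ((t ^ (β / 2))⁻¹) * ENNReal.ofReal A := by
        rw [ENNReal.ofReal_inv_of_pos hb]
    _ = ENNReal.ofReal (A * t ^ (-(β / 2))) := by
        rw [← ENNReal.ofReal_mul (by positivity), Real.rpow_neg ht.le, mul_comm]


/-- for `0 < α < β`, `g ≥ 0` with `M_B g(x) ≤ M` and
`sup_{t>0} t^{β/2}(h_t*g)(x) ≤ A`, one has
`Γ(α/2) I_α g(x) = ∫_0^∞ t^{α/2-1}(h_t*g)(x) dt ≤ C(n,α,β) M^{1-α/β} A^{α/β}`. -/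
theorem heat_riesz_splitting (n : ℕ) (hn : 1 ≤ n) (α β : ℝ) (hα : 0 < α) (hαβ : α < β) :
    ∃ C : ℝ, 0 < C ∧ ∀ (g : EuclideanSpace ℝ (Fin n) → ℝ), Measurable g → (∀ y, 0 ≤ g y) →
      ∀ (x : EuclideanSpace ℝ (Fin n)) (M A : ℝ), 0 ≤ M → 0 ≤ A →
        maximalFn n g x ≤ ENNReal.ofReal M →
        (∀ t : ℝ, 0 < t → ENNReal.ofReal (t ^ (β / 2)) * heatConv n t g x ≤ ENNReal.ofReal A) →
        (∫⁻ t in Ioi (0 : ℝ), ENNReal.ofReal (t ^ (α / 2 - 1)) * heatConv n t g x) ≤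
          ENNReal.ofReal (C * M ^ (1 - α / β) * A ^ (α / β)) := by
  obtain ⟨C₁, hC₁, hconv⟩ := conv_le n hn
  have hβ : 0 < β := hα.trans hαβ
  refine ⟨C₁ * (2 / α) + 2 / (β - α),
    add_pos (mul_pos hC₁ (by positivity)) (div_pos (by norm_num) (by linarith)), ?_⟩
  intro g hgm hg0 x M A hM0 hA0 hM hsup
  -- degenerate cases
  by_cases hdeg : M = 0 ∨ A = 0
  · have hzero : ∀ t : ℝ, 0 < t → heatConv n t g x = 0 := by
      intro t ht
      rcases hdeg with h | h
      · have := hconv g hgm hg0 x M hM0 hM t ht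
        simpa [h] using this
      · have := hsup t ht
        rw [h, ENNReal.ofReal_zero, nonpos_iff_eq_zero, mul_eq_zero] at this
        rcases this with h' | h'
        · exact absurd h' (ENNReal.ofReal_pos.2 (Real.rpow_pos_of_pos ht _)).ne'
        · exact h'
    have : (∫⁻ t in Ioi (0 : ℝ), ENNReal.ofReal (t ^ (α / 2 - 1)) * heatConv n t g x) = 0 := by
      rw [setLIntegral_congr_fun measurableSet_Ioi
        ((fun t (ht : t ∈ Ioi (0:ℝ)) => by
          rw [hzero t ht, mul_zero] : ∀ t ∈ Ioi (0:ℝ), ENNReal.ofReal (t ^ (α / 2 - 1)) *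
            heatConv n t g x = (fun _ => (0:ℝ≥0∞)) t))]
      simp
    rw [this]
    exact zero_le
  push_neg at hdeg
  have hMpos : 0 < M := lt_of_le_of_ne hM0 (Ne.symm hdeg.1)
  have hApos : 0 < A := lt_of_le_of_ne hA0 (Ne.symm hdeg.2)
  set T : ℝ := (A / M) ^ (2 / β) with hTdef
  have hAM : (0:ℝ) < A / M := div_pos hApos hMpos
  have hT : 0 < T := Real.rpow_pos_of_pos hAM _
  -- split the integral
  rw [← Ioc_union_Ioi_eq_Ioi hT.le, lintegral_union measurableSet_Ioi (Ioc_disjoint_Ioi le_rfl)]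
  -- small time piece
  have hint1 : IntegrableOn (fun t : ℝ => t ^ (α / 2 - 1)) (Ioc 0 T) := by
    have := intervalIntegral.intervalIntegrable_rpow' (a := 0) (b := T)
      (r := α / 2 - 1) (by linarith)
    rwa [intervalIntegrable_iff_integrableOn_Ioc_of_le hT.le] at this
  have hI1 : (∫⁻ t in Ioc (0:ℝ) T, ENNReal.ofReal (t ^ (α / 2 - 1))) =
      ENNReal.ofReal (T ^ (α / 2) / (α / 2)) := by
    rw [← ofReal_integral_eq_lintegral_ofReal hint1
      ((ae_restrict_iff' measurableSet_Ioc).2 (ae_of_all _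
        (fun t ht => Real.rpow_nonneg ht.1.le _)))]
    congr 1
    rw [← intervalIntegral.integral_of_le hT.le, integral_rpow (Or.inl (by linarith)),
      show α / 2 - 1 + 1 = α / 2 by ring, Real.zero_rpow (by positivity : (0:ℝ) < α / 2).ne']
    ring
  have hsmall : (∫⁻ t in Ioc (0:ℝ) T, ENNReal.ofReal (t ^ (α / 2 - 1)) * heatConv n t g x) ≤
      ENNReal.ofReal (C₁ * M * (T ^ (α / 2) / (α / 2))) := by
    calc (∫⁻ t in Ioc (0:ℝ) T, ENNReal.ofReal (t ^ (α / 2 - 1)) * heatConv n t g x)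
        ≤ ∫⁻ t in Ioc (0:ℝ) T, ENNReal.ofReal (C₁ * M) * ENNReal.ofReal (t ^ (α / 2 - 1)) := by
          apply lintegral_mono_ae
          refine (ae_restrict_iff' measurableSet_Ioc).2 (ae_of_all _ (fun t ht => ?_))
          rw [mul_comm (ENNReal.ofReal (C₁ * M))]
          exact mul_le_mul_right (hconv g hgm hg0 x M hM0 hM t ht.1) _
      _ = ENNReal.ofReal (C₁ * M) * ∫⁻ t in Ioc (0:ℝ) T, ENNReal.ofReal (t ^ (α / 2 - 1)) :=
          lintegral_const_mul' _ _ ENNReal.ofReal_ne_top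
      _ = ENNReal.ofReal (C₁ * M * (T ^ (α / 2) / (α / 2))) := by
          rw [hI1, ← ENNReal.ofReal_mul (by positivity)]
  -- large time piece
  have hγ : (α - β) / 2 - 1 < -1 := by linarith
  have hI2 : (∫⁻ t in Ioi T, ENNReal.ofReal (A * t ^ ((α - β) / 2 - 1))) =
      ENNReal.ofReal (A * (T ^ ((α - β) / 2) * (2 / (β - α)))) := by
    rw [← ofReal_integral_eq_lintegral_ofReal
      ((integrableOn_Ioi_rpow_of_lt hγ hT).const_mul A)
      ((ae_restrict_iff' measurableSet_Ioi).2 (ae_of_all _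
        (fun t (ht : t ∈ Ioi T) => mul_nonneg hA0 (Real.rpow_nonneg (hT.trans ht).le _))))]
    congr 1
    rw [integral_const_mul, integral_Ioi_rpow_of_lt hγ hT,
      show (α - β) / 2 - 1 + 1 = (α - β) / 2 by ring]
    congr 1
    generalize T ^ ((α - β) / 2) = w
    rw [show (α - β) / 2 = -((β - α) / 2) by ring, div_neg, neg_div, neg_neg,
      div_div_eq_mul_div, mul_div_assoc]
  have hlarge : (∫⁻ t in Ioi T, ENNReal.ofReal (t ^ (α / 2 - 1)) * heatConv n t g x) ≤
      ENNReal.ofReal (A * (T ^ ((α - β) / 2) * (2 / (β - α)))) := by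
    rw [← hI2]
    apply lintegral_mono_ae
    refine (ae_restrict_iff' measurableSet_Ioi).2 (ae_of_all _ (fun t (ht : t ∈ Ioi T) => ?_))
    have htpos : 0 < t := hT.trans ht
    calc ENNReal.ofReal (t ^ (α / 2 - 1)) * heatConv n t g x
        ≤ ENNReal.ofReal (t ^ (α / 2 - 1)) * ENNReal.ofReal (A * t ^ (-(β / 2))) :=
          mul_le_mul_right (heatConv_large_time n β g x A hsup t htpos) _
      _ = ENNReal.ofReal (t ^ (α / 2 - 1) * (A * t ^ (-(β / 2)))) :=
          (ENNReal.ofReal_mul (Real.rpow_nonneg htpos.le _)).symm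
      _ = ENNReal.ofReal (A * t ^ ((α - β) / 2 - 1)) := by
          congr 1
          rw [show t ^ (α / 2 - 1) * (A * t ^ (-(β / 2))) =
            A * (t ^ (α / 2 - 1) * t ^ (-(β / 2))) by ring,
            ← Real.rpow_add htpos, show α / 2 - 1 + -(β / 2) = (α - β) / 2 - 1 by ring]
  -- combine and compute
  have hβα : (β - α) ≠ 0 := ne_of_gt (by linarith)
  have hT1 : T ^ (α / 2) = A ^ (α / β) / M ^ (α / β) := by
    rw [hTdef, ← Real.rpow_mul hAM.le, show 2 / β * (α / 2) = α / β by
      field_simp, Real.div_rpow hA0 hM0]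
  have hT2 : T ^ ((α - β) / 2) = (A ^ (α / β) / A) / (M ^ (α / β) / M) := by
    rw [hTdef, ← Real.rpow_mul hAM.le, show 2 / β * ((α - β) / 2) = α / β - 1 by
      field_simp, Real.div_rpow hA0 hM0, Real.rpow_sub hApos, Real.rpow_sub hMpos,
      Real.rpow_one, Real.rpow_one]
  have hM2 : M ^ (1 - α / β) = M / M ^ (α / β) := by
    rw [Real.rpow_sub hMpos, Real.rpow_one]
  have hx : (0:ℝ) < A ^ (α / β) := Real.rpow_pos_of_pos hApos _
  have hy : (0:ℝ) < M ^ (α / β) := Real.rpow_pos_of_pos hMpos _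
  have key : C₁ * M * (T ^ (α / 2) / (α / 2)) + A * (T ^ ((α - β) / 2) * (2 / (β - α))) =
      (C₁ * (2 / α) + 2 / (β - α)) * M ^ (1 - α / β) * A ^ (α / β) := by
    rw [hT1, hT2, hM2]
    field_simp
  calc (∫⁻ t in Ioc (0:ℝ) T, ENNReal.ofReal (t ^ (α / 2 - 1)) * heatConv n t g x) +
        ∫⁻ t in Ioi T, ENNReal.ofReal (t ^ (α / 2 - 1)) * heatConv n t g x
      ≤ ENNReal.ofReal (C₁ * M * (T ^ (α / 2) / (α / 2))) +
        ENNReal.ofReal (A * (T ^ ((α - β) / 2) * (2 / (β - α)))) := add_le_add hsmall hlarge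
    _ = ENNReal.ofReal (C₁ * M * (T ^ (α / 2) / (α / 2)) +
        A * (T ^ ((α - β) / 2) * (2 / (β - α)))) :=
        (ENNReal.ofReal_add
          (mul_nonneg (mul_nonneg hC₁.le hM0)
            (div_nonneg (Real.rpow_nonneg hT.le _) (by positivity)))
          (mul_nonneg hA0 (mul_nonneg (Real.rpow_nonneg hT.le _)
            (div_nonneg (by norm_num) (by linarith))))).symm
    _ = ENNReal.ofReal ((C₁ * (2 / α) + 2 / (β - α)) * M ^ (1 - α / β) * A ^ (α / β)) := by
        rw [key]
end
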